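/- arXiv:2403.07043 — 4 statements merged into one kernel-verified Lean document; each statement's English description precedes it below -/
import Mathlib

section
/- Let p, v ∈ ℝ² be nonzero with ‖p‖ > r > 0, and let h = ⟨p,v⟩ + ‖v‖√(‖p‖²−r²). For any γ ≥ 0, if h ≥ 0 then ⟨v,v⟩ + ⟨p,v⟩‖v‖/√(‖p‖²−r²) + γ·h ≥ 0. -/
open RealInnerProductSpace

theorem c3bf_bicycle_cbf_condition
    (p v : EuclideanSpace ℝ (Fin 2)) (hp : p ≠ 0) (hv : v ≠ 0)
    (r : ℝ) (hr : 0 < r) (hpr : r < ‖p‖)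
    (h : ℝ) (hh : h = ⟪p, v⟫ + ‖v‖ * Real.sqrt (‖p‖ ^ 2 - r ^ 2))
    (γ : ℝ) (hγ : 0 ≤ γ) (hsafe : 0 ≤ h) :
    0 ≤ ⟪v, v⟫ + ⟪p, v⟫ * ‖v‖ / Real.sqrt (‖p‖ ^ 2 - r ^ 2) + γ * h := by
  set s := Real.sqrt (‖p‖ ^ 2 - r ^ 2) with hs_def
  have hs : 0 < s := Real.sqrt_pos.mpr (by nlinarith)
  have hvv : ⟪v, v⟫ = ‖v‖ ^ 2 := real_inner_self_eq_norm_sq v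
  have h1 : -‖v‖ ≤ ⟪p, v⟫ / s := by
    rw [le_div_iff₀ hs]
    nlinarith [hsafe, hh]
  have h2 : ⟪p, v⟫ * ‖v‖ / s = (⟪p, v⟫ / s) * ‖v‖ := by ring
  have hγh : 0 ≤ γ * h := mul_nonneg hγ hsafe
  nlinarith [norm_nonneg v, mul_le_mul_of_nonneg_right h1 (norm_nonneg v)]
end

section
/- Let p₀, v ∈ ℝ² with v ≠ 0 and ‖p₀‖ > r > 0. The minimum over t ≥ 0 of ‖p₀ + t·v‖ is less than r if and only if ⟨p₀, v⟩ < 0 and the distance from the origin to the line {p₀ + t·v : t ∈ ℝ} is less than r; moreover this is equivalent to ⟨p₀, v⟩ + ‖v‖·√(‖p₀‖² − r²) < 0. -/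
open RealInnerProductSpace

set_option maxHeartbeats 1000000 in
/-- Collision-cone characterization: collision (minimum forward distance below `r`) occurs
iff the obstacle is approaching (`⟪p₀,v⟫ < 0`) and the line misses the origin by less
than `r`; and this is equivalent to negativity of the C3BF candidate. -/
theorem collision_cone_characterization
    (p₀ v : EuclideanSpace ℝ (Fin 2)) (hv : v ≠ 0)
    (r : ℝ) (hr : 0 < r) (hpr : r < ‖p₀‖) :
    ((∃ t : ℝ, 0 ≤ t ∧ ‖p₀ + t • v‖ < r) ↔
      (⟪p₀, v⟫ < 0 ∧ sInf (Set.range fun t : ℝ => ‖p₀ + t • v‖) < r)) ∧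
    ((∃ t : ℝ, 0 ≤ t ∧ ‖p₀ + t • v‖ < r) ↔
      ⟪p₀, v⟫ + ‖v‖ * Real.sqrt (‖p₀‖ ^ 2 - r ^ 2) < 0) := by
  have hvn : (0:ℝ) < ‖v‖ := norm_pos_iff.mpr hv
  have ha : (0:ℝ) < ‖v‖ ^ 2 := by positivity
  set b : ℝ := ⟪p₀, v⟫ with hbdef
  have hc : r ^ 2 < ‖p₀‖ ^ 2 := by nlinarith
  have key : ∀ t : ℝ, ‖p₀ + t • v‖ ^ 2 = ‖p₀‖ ^ 2 + 2 * t * b + t ^ 2 * ‖v‖ ^ 2 := by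
    intro t
    rw [norm_add_sq_real, real_inner_smul_right, norm_smul, Real.norm_eq_abs]
    rw [mul_pow, sq_abs]
    ring
  -- core characterization
  have core : (∃ t : ℝ, 0 ≤ t ∧ ‖p₀ + t • v‖ < r) ↔
      (b < 0 ∧ ‖v‖ ^ 2 * (‖p₀‖ ^ 2 - r ^ 2) < b ^ 2) := by
    constructor
    · rintro ⟨t, ht, hlt⟩
      have hsq : ‖p₀ + t • v‖ ^ 2 < r ^ 2 := by
        have := norm_nonneg (p₀ + t • v); nlinarith
      rw [key t] at hsq
      have htpos : 0 < t := by
        rcases ht.lt_or_eq with h | h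
        · exact h
        · exfalso; rw [← h] at hsq; nlinarith
      have hbneg : b < 0 := by nlinarith
      refine ⟨hbneg, ?_⟩
      nlinarith [sq_nonneg (b + t * ‖v‖ ^ 2)]
    · rintro ⟨hbneg, hdisc⟩
      refine ⟨-b / ‖v‖ ^ 2, le_of_lt (div_pos (neg_pos.mpr hbneg) ha), ?_⟩
      have hq : b ^ 2 / ‖v‖ ^ 2 * ‖v‖ ^ 2 = b ^ 2 := div_mul_cancel₀ _ (ne_of_gt ha)
      have hsq : ‖p₀ + (-b / ‖v‖ ^ 2) • v‖ ^ 2 < r ^ 2 := by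
        rw [key]
        have : ‖p₀‖ ^ 2 + 2 * (-b / ‖v‖ ^ 2) * b + (-b / ‖v‖ ^ 2) ^ 2 * ‖v‖ ^ 2
            = ‖p₀‖ ^ 2 - b ^ 2 / ‖v‖ ^ 2 := by field_simp; ring
        rw [this]
        nlinarith [hq]
      nlinarith [norm_nonneg (p₀ + (-b / ‖v‖ ^ 2) • v)]
  constructor
  · rw [core]
    have hInf : sInf (Set.range fun t : ℝ => ‖p₀ + t • v‖) = ‖p₀ + (-b / ‖v‖ ^ 2) • v‖ := by
      apply IsLeast.csInf_eq
      constructor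
      · exact ⟨-b / ‖v‖ ^ 2, rfl⟩
      · rintro x ⟨t, rfl⟩
        simp only
        have h1 := key t
        have h2 := key (-b / ‖v‖ ^ 2)
        have e2 : ‖p₀ + (-b / ‖v‖ ^ 2) • v‖ ^ 2 = ‖p₀‖ ^ 2 - b ^ 2 / ‖v‖ ^ 2 := by
          rw [h2]; field_simp; ring
        have hle : ‖p₀ + (-b / ‖v‖ ^ 2) • v‖ ^ 2 ≤ ‖p₀ + t • v‖ ^ 2 := by
          have hq : b ^ 2 / ‖v‖ ^ 2 * ‖v‖ ^ 2 = b ^ 2 := div_mul_cancel₀ _ (ne_of_gt ha)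
          rw [e2, h1]
          nlinarith [hq, sq_nonneg (b + t * ‖v‖ ^ 2)]
        nlinarith [norm_nonneg (p₀ + (-b / ‖v‖ ^ 2) • v), norm_nonneg (p₀ + t • v)]
    rw [hInf]
    constructor
    · rintro ⟨hbneg, hdisc⟩
      refine ⟨hbneg, ?_⟩
      have e2 : ‖p₀ + (-b / ‖v‖ ^ 2) • v‖ ^ 2 = ‖p₀‖ ^ 2 - b ^ 2 / ‖v‖ ^ 2 := by
        rw [key]; field_simp; ring
      have : ‖p₀ + (-b / ‖v‖ ^ 2) • v‖ ^ 2 < r ^ 2 := by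
        have hq : b ^ 2 / ‖v‖ ^ 2 * ‖v‖ ^ 2 = b ^ 2 := div_mul_cancel₀ _ (ne_of_gt ha)
        rw [e2]
        nlinarith [hq]
      nlinarith [norm_nonneg (p₀ + (-b / ‖v‖ ^ 2) • v)]
    · rintro ⟨hbneg, hlt⟩
      refine ⟨hbneg, ?_⟩
      have e2 : ‖p₀ + (-b / ‖v‖ ^ 2) • v‖ ^ 2 = ‖p₀‖ ^ 2 - b ^ 2 / ‖v‖ ^ 2 := by
        rw [key]; field_simp; ring
      have hsq : ‖p₀ + (-b / ‖v‖ ^ 2) • v‖ ^ 2 < r ^ 2 := by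
        have := norm_nonneg (p₀ + (-b / ‖v‖ ^ 2) • v); nlinarith
      rw [e2] at hsq
      have hq : b ^ 2 / ‖v‖ ^ 2 * ‖v‖ ^ 2 = b ^ 2 := div_mul_cancel₀ _ (ne_of_gt ha)
      nlinarith [hq]
  · rw [core]
    have hs : Real.sqrt (‖p₀‖ ^ 2 - r ^ 2) ^ 2 = ‖p₀‖ ^ 2 - r ^ 2 :=
      Real.sq_sqrt (by nlinarith)
    have hs0 : 0 < Real.sqrt (‖p₀‖ ^ 2 - r ^ 2) := Real.sqrt_pos.mpr (by nlinarith)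
    constructor
    · rintro ⟨hbneg, hdisc⟩
      nlinarith [mul_pos hvn hs0]
    · intro h
      have hbneg : b < 0 := by nlinarith [mul_pos hvn hs0]
      refine ⟨hbneg, ?_⟩
      nlinarith [mul_pos hvn hs0]
end

section
/- For nonzero p, v ∈ ℝ² with ‖p‖ > r > 0 and a constant γ with 0 < γ < ‖v‖, define h_HO = ⟨p,v⟩ + γ·√(‖p‖² − r²) and h_C3BF = ⟨p,v⟩ + ‖v‖·√(‖p‖² − r²). Then h_HO ≥ 0 implies h_C3BF ≥ 0, and the implication is strict: there exist p, v with h_C3BF ≥ 0 but h_HO < 0. -/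
open RealInnerProductSpace

/-- The HO-CBF safe set is a strict subset of the C3BF safe set when `γ < ‖v‖`. -/
theorem hocbf_more_conservative_than_c3bf (r γ : ℝ) (hr : 0 < r) (hγ : 0 < γ) :
    (∀ p v : EuclideanSpace ℝ (Fin 2), p ≠ 0 → v ≠ 0 → r < ‖p‖ → γ < ‖v‖ →
      0 ≤ ⟪p, v⟫ + γ * Real.sqrt (‖p‖ ^ 2 - r ^ 2) →
      0 ≤ ⟪p, v⟫ + ‖v‖ * Real.sqrt (‖p‖ ^ 2 - r ^ 2)) ∧
    (∃ p v : EuclideanSpace ℝ (Fin 2), p ≠ 0 ∧ v ≠ 0 ∧ r < ‖p‖ ∧ γ < ‖v‖ ∧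
      0 ≤ ⟪p, v⟫ + ‖v‖ * Real.sqrt (‖p‖ ^ 2 - r ^ 2) ∧
      ⟪p, v⟫ + γ * Real.sqrt (‖p‖ ^ 2 - r ^ 2) < 0) := by
  have h3 : Real.sqrt 3 ^ 2 = 3 := Real.sq_sqrt (by norm_num)
  have h5 : Real.sqrt 5 ^ 2 = 5 := Real.sq_sqrt (by norm_num)
  have h3n : 0 ≤ Real.sqrt 3 := Real.sqrt_nonneg _
  have h5n : 0 ≤ Real.sqrt 5 := Real.sqrt_nonneg _
  constructor
  · intro p v _ _ _ hγv h
    have hs : 0 ≤ Real.sqrt (‖p‖ ^ 2 - r ^ 2) := Real.sqrt_nonneg _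
    nlinarith [hγv, hs]
  · set p : EuclideanSpace ℝ (Fin 2) := (WithLp.toLp 2 ![2*r, 0] : EuclideanSpace ℝ (Fin 2)) with hpdef
    set v : EuclideanSpace ℝ (Fin 2) := (WithLp.toLp 2 ![-γ, 2*γ] : EuclideanSpace ℝ (Fin 2)) with hvdef
    have hnp : ‖p‖ = 2*r := by
      rw [hpdef, EuclideanSpace.norm_eq]
      rw [show ∑ i, ‖((WithLp.toLp 2 ![2*r, 0] : EuclideanSpace ℝ (Fin 2)) : EuclideanSpace ℝ (Fin 2)) i‖ ^ 2 = (2*r)^2 by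
        simp [Fin.sum_univ_two, sq_abs]]
      exact Real.sqrt_sq (by positivity)
    have hnv : ‖v‖ = Real.sqrt 5 * γ := by
      rw [hvdef, EuclideanSpace.norm_eq]
      rw [show ∑ i, ‖((WithLp.toLp 2 ![-γ, 2*γ] : EuclideanSpace ℝ (Fin 2)) : EuclideanSpace ℝ (Fin 2)) i‖ ^ 2 = 5 * γ^2 by
        simp [Fin.sum_univ_two, sq_abs]; ring]
      rw [show (5 : ℝ) * γ^2 = 5 * γ^2 by ring, Real.sqrt_mul (by norm_num),
        Real.sqrt_sq hγ.le]
    have hinner : ⟪p, v⟫ = -(2*r*γ) := by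
      simp [hpdef, hvdef, PiLp.inner_apply, Fin.sum_univ_two]; ring
    have hsq : Real.sqrt (‖p‖ ^ 2 - r ^ 2) = Real.sqrt 3 * r := by
      rw [hnp, show (2*r)^2 - r^2 = 3 * r^2 by ring, Real.sqrt_mul (by norm_num),
        Real.sqrt_sq hr.le]
    refine ⟨p, v, ?_, ?_, ?_, ?_, ?_, ?_⟩
    · intro h
      have h0 : p 0 = 0 := by rw [h]; rfl
      simp [hpdef] at h0
      linarith
    · intro h
      have h0 : v 1 = 0 := by rw [h]; rfl
      simp [hvdef] at h0
      linarith
    · rw [hnp]; linarith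
    · rw [hnv]; nlinarith
    · have hst : 2 < Real.sqrt 5 * Real.sqrt 3 := by
        rw [← Real.sqrt_mul (by norm_num : (0:ℝ) ≤ 5)]
        norm_num
        rw [show (2:ℝ) = Real.sqrt 4 by
          rw [show (4:ℝ) = 2^2 by norm_num, Real.sqrt_sq]; norm_num]
        exact Real.sqrt_lt_sqrt (by norm_num) (by norm_num)
      rw [hinner, hnv, hsq]
      nlinarith [mul_pos hr hγ]
    · have hst : Real.sqrt 3 < 2 := by nlinarith
      rw [hinner, hsq]
      nlinarith [mul_pos hr hγ]
end

section
/- For the double integrator ṗ = v, v̇ = u in ℝ², the collision-cone candidate h(p,v) = ⟨p_rel, v_rel⟩ + ‖v_rel‖√(‖p_rel‖² − r²), with p_rel = c − p (obstacle at c with constant velocity ċ) and v_rel = ċ − v, satisfies L_g h = −(p_rel + (√(‖p_rel‖² − r²)/‖v_rel‖)·v_rel)ᵀ, which is nonzero wherever ‖p_rel‖ > r and v_rel ≠ 0; hence h is a valid CBF there. -/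
open RealInnerProductSpace

/-- For the double integrator, the input-direction gradient of the C3BF candidate
(its `v`-gradient) is `-(p_rel + (√(‖p_rel‖²−r²)/‖v_rel‖)•v_rel)`, which is nonzero
whenever `‖p_rel‖ > r` and `v_rel ≠ 0`; hence `L_g h ≠ 0`. -/
theorem c3bf_double_integrator_Lgh
    (c cdot p v : EuclideanSpace ℝ (Fin 2)) (r : ℝ) (hr : 0 < r)
    (hpr : r < ‖c - p‖) (hvrel : cdot - v ≠ 0) :
    HasGradientAt (fun w : EuclideanSpace ℝ (Fin 2) =>
        ⟪c - p, cdot - w⟫ + ‖cdot - w‖ * Real.sqrt (‖c - p‖ ^ 2 - r ^ 2))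
      (-((c - p) + (Real.sqrt (‖c - p‖ ^ 2 - r ^ 2) / ‖cdot - v‖) • (cdot - v))) v ∧
    -((c - p) + (Real.sqrt (‖c - p‖ ^ 2 - r ^ 2) / ‖cdot - v‖) • (cdot - v)) ≠ 0 := by
  let E := EuclideanSpace ℝ (Fin 2)
  set a : E := c - p with ha
  set s : ℝ := Real.sqrt (‖a‖ ^ 2 - r ^ 2) with hs
  set x : E := cdot - v with hx
  have hxnorm : ‖x‖ ≠ 0 := norm_ne_zero_iff.mpr hvrel
  have hsub : ∀ w : E, ‖a‖ ^ 2 - r ^ 2 ≥ 0 := fun _ => by nlinarith [hr.le, hpr]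
  constructor
  · -- gradient
    have hg : HasFDerivAt (fun w : E => cdot - w)
        ((0 : E →L[ℝ] E) - ContinuousLinearMap.id ℝ E) v :=
      (hasFDerivAt_const cdot v).sub (hasFDerivAt_id v)
    -- norm squared of (cdot - w)
    have hq : HasFDerivAt (fun w : E => ‖cdot - w‖ ^ 2)
        (2 • (innerSL ℝ x).comp ((0 : E →L[ℝ] E) - ContinuousLinearMap.id ℝ E)) v :=
      hg.norm_sq
    have hq0 : ‖cdot - v‖ ^ 2 ≠ 0 := pow_ne_zero 2 hxnorm
    have hnorm : HasFDerivAt (fun w : E => Real.sqrt (‖cdot - w‖ ^ 2))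
        ((1 / (2 * Real.sqrt (‖cdot - v‖ ^ 2))) •
          (2 • (innerSL ℝ x).comp ((0 : E →L[ℝ] E) - ContinuousLinearMap.id ℝ E))) v :=
      hq.sqrt hq0
    have heq : (fun w : E => Real.sqrt (‖cdot - w‖ ^ 2)) = fun w : E => ‖cdot - w‖ := by
      funext w; exact Real.sqrt_sq (norm_nonneg _)
    rw [heq] at hnorm
    have hinner : HasFDerivAt (fun w : E => ⟪a, cdot - w⟫)
        ((innerSL ℝ a).comp ((0 : E →L[ℝ] E) - ContinuousLinearMap.id ℝ E)) v :=
      (innerSL ℝ a).hasFDerivAt.comp v hg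
    have htot := hinner.add (hnorm.mul_const s)
    rw [hasGradientAt_iff_hasFDerivAt]
    convert htot using 1
    · rfl
    · rfl
    · rfl
    ext d
    have hsqrt : Real.sqrt (‖cdot - v‖ ^ 2) = ‖x‖ := Real.sqrt_sq (norm_nonneg _)
    simp only [ContinuousLinearMap.add_apply, ContinuousLinearMap.smul_apply,
      ContinuousLinearMap.comp_apply, ContinuousLinearMap.sub_apply,
      ContinuousLinearMap.zero_apply, ContinuousLinearMap.id_apply,
      ContinuousLinearMap.coe_smul', Pi.smul_apply, innerSL_apply_apply, zero_sub,
      inner_neg_right, hsqrt, InnerProductSpace.toDual_apply_apply, smul_eq_mul]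
    rw [inner_neg_left, inner_add_left, inner_smul_left]
    simp only [ContinuousLinearMap.neg_apply, ContinuousLinearMap.id_apply,
      inner_neg_right, smul_eq_mul, RCLike.star_def, conj_trivial, nsmul_eq_mul,
      Nat.cast_ofNat, mul_neg]
    change -(⟪a, d⟫ + s / ‖x‖ * ⟪x, d⟫) = -⟪a, d⟫ + -(s * (1 / (2 * ‖x‖) * (2 * ⟪x, d⟫)))
    generalize (inner ℝ a d : ℝ) = I1
    generalize (inner ℝ x d : ℝ) = I2
    field_simp
    ring
  · -- nonzero
    intro hzero
    rw [neg_eq_zero] at hzero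
    have hax : a = -((s / ‖x‖) • x) := by
      have := eq_neg_of_add_eq_zero_left hzero
      exact this
    have hs0 : 0 ≤ s := Real.sqrt_nonneg _
    have hna : ‖a‖ = s := by
      rw [hax, norm_neg, norm_smul, Real.norm_eq_abs, abs_of_nonneg (by positivity),
        div_mul_cancel₀ _ hxnorm]
    have hs2 : s ^ 2 = ‖a‖ ^ 2 - r ^ 2 := Real.sq_sqrt (hsub v)
    nlinarith [hr, hna, hs2]
end
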